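/- Let m ≥ 1, let A₀ ∈ ℝ^{2m×2m} be a fixed matrix, and let β ∈ ℝ. For v = (v₁; v₂) ∈ ℝ^{2m} with v ≠ 0 (v₁, v₂ ∈ ℝ^m), define B(v) := blockdiag(D(v), D(v)) where D(v) := diag(v₁)² + diag(v₂)², and define A(v) := A₀ + (β/(vᵀv)) B(v). Then the Jacobian J(v) of the map v ↦ A(v)v at v equals A₀ + (β/(vᵀv)) [ [3·diag(v₁)² + diag(v₂)², 2·diag(v₁)·diag(v₂)], [2·diag(v₁)·diag(v₂), diag(v₁)² + 3·diag(v₂)²] ] − (2β/(vᵀv)²) (B(v)v) vᵀ. -/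

import Mathlib

open Matrix
open scoped RealInnerProductSpace

noncomputable def mvCLM {ι : Type*} [Fintype ι] [DecidableEq ι] (M : Matrix ι ι ℝ) :
    EuclideanSpace ℝ ι →L[ℝ] EuclideanSpace ℝ ι :=
  LinearMap.toContinuousLinearMap (Matrix.toEuclideanLin M)

/-- `D(v) = diag(v₁)² + diag(v₂)²`. -/
noncomputable def gpeD {m : ℕ} (v : EuclideanSpace ℝ (Fin m ⊕ Fin m)) :
    Matrix (Fin m) (Fin m) ℝ :=
  (Matrix.diagonal fun i => v (Sum.inl i)) ^ 2 + (Matrix.diagonal fun i => v (Sum.inr i)) ^ 2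

/-- `B(v) = blockdiag(D(v), D(v))`. -/
noncomputable def gpeB {m : ℕ} (v : EuclideanSpace ℝ (Fin m ⊕ Fin m)) :
    Matrix (Fin m ⊕ Fin m) (Fin m ⊕ Fin m) ℝ :=
  Matrix.fromBlocks (gpeD v) 0 0 (gpeD v)

/-- `A(v) = A₀ + (β/(vᵀv)) B(v)`. -/
noncomputable def gpeA {m : ℕ} (A₀ : Matrix (Fin m ⊕ Fin m) (Fin m ⊕ Fin m) ℝ) (β : ℝ)
    (v : EuclideanSpace ℝ (Fin m ⊕ Fin m)) :
    Matrix (Fin m ⊕ Fin m) (Fin m ⊕ Fin m) ℝ :=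
  A₀ + (β / ⟪v, v⟫) • gpeB v

/-- The claimed Jacobian of `v ↦ A(v)v` for the real-form Gross–Pitaevskii problem. -/
noncomputable def gpeJ {m : ℕ} (A₀ : Matrix (Fin m ⊕ Fin m) (Fin m ⊕ Fin m) ℝ) (β : ℝ)
    (v : EuclideanSpace ℝ (Fin m ⊕ Fin m)) :
    Matrix (Fin m ⊕ Fin m) (Fin m ⊕ Fin m) ℝ :=
  A₀ + (β / ⟪v, v⟫) • Matrix.fromBlocks
      ((3 : ℝ) • (Matrix.diagonal fun i => v (Sum.inl i)) ^ 2 +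
        (Matrix.diagonal fun i => v (Sum.inr i)) ^ 2)
      ((2 : ℝ) • ((Matrix.diagonal fun i => v (Sum.inl i)) *
        (Matrix.diagonal fun i => v (Sum.inr i))))
      ((2 : ℝ) • ((Matrix.diagonal fun i => v (Sum.inl i)) *
        (Matrix.diagonal fun i => v (Sum.inr i))))
      ((Matrix.diagonal fun i => v (Sum.inl i)) ^ 2 +
        (3 : ℝ) • (Matrix.diagonal fun i => v (Sum.inr i)) ^ 2)
    - (2 * β / ⟪v, v⟫ ^ 2) • Matrix.vecMulVec ((gpeB v).mulVec fun i => v i) (fun i => v i)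

lemma gpeD_eq {m : ℕ} (v : EuclideanSpace ℝ (Fin m ⊕ Fin m)) :
    gpeD v = Matrix.diagonal (fun i => v (Sum.inl i) ^ 2 + v (Sum.inr i) ^ 2) := by
  simp [gpeD, sq, Matrix.diagonal_mul_diagonal, ← Matrix.diagonal_add]

lemma gpeB_mulVec {m : ℕ} (v : EuclideanSpace ℝ (Fin m ⊕ Fin m)) (x : Fin m ⊕ Fin m → ℝ)
    (k : Fin m ⊕ Fin m) :
    (gpeB v).mulVec x k = (v k ^ 2 + v (Sum.swap k) ^ 2) * x k := by
  cases k with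
  | inl i =>
    simp [gpeB, gpeD_eq, Matrix.mulVec, dotProduct, Fintype.sum_sum_type,
      Matrix.diagonal_apply, ite_mul, add_comm]
  | inr i =>
    simp [gpeB, gpeD_eq, Matrix.mulVec, dotProduct, Fintype.sum_sum_type,
      Matrix.diagonal_apply, ite_mul, add_comm]

lemma cmat_mulVec {m : ℕ} (v : EuclideanSpace ℝ (Fin m ⊕ Fin m)) (u : Fin m ⊕ Fin m → ℝ)
    (k : Fin m ⊕ Fin m) :
    (Matrix.fromBlocks
      ((3 : ℝ) • (Matrix.diagonal fun i => v (Sum.inl i)) ^ 2 +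
        (Matrix.diagonal fun i => v (Sum.inr i)) ^ 2)
      ((2 : ℝ) • ((Matrix.diagonal fun i => v (Sum.inl i)) *
        (Matrix.diagonal fun i => v (Sum.inr i))))
      ((2 : ℝ) • ((Matrix.diagonal fun i => v (Sum.inl i)) *
        (Matrix.diagonal fun i => v (Sum.inr i))))
      ((Matrix.diagonal fun i => v (Sum.inl i)) ^ 2 +
        (3 : ℝ) • (Matrix.diagonal fun i => v (Sum.inr i)) ^ 2)).mulVec u k
    = (3 * v k ^ 2 + v (Sum.swap k) ^ 2) * u k + 2 * v k * v (Sum.swap k) * u (Sum.swap k) := by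
  cases k with
  | inl i =>
    simp only [Matrix.mulVec, dotProduct, Fintype.sum_sum_type, sq,
      Matrix.diagonal_mul_diagonal, Matrix.smul_apply, Matrix.add_apply,
      Matrix.fromBlocks_apply₁₁, Matrix.fromBlocks_apply₁₂, Matrix.diagonal_apply,
      smul_ite, smul_eq_mul, mul_zero, smul_zero, mul_ite, ite_mul, zero_mul, add_mul,
      Finset.sum_add_distrib, Finset.sum_ite_eq, Finset.mem_univ, if_pos, Sum.swap_inl]
    ring
  | inr i =>
    simp only [Matrix.mulVec, dotProduct, Fintype.sum_sum_type, sq,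
      Matrix.diagonal_mul_diagonal, Matrix.smul_apply, Matrix.add_apply,
      Matrix.fromBlocks_apply₂₁, Matrix.fromBlocks_apply₂₂, Matrix.diagonal_apply,
      smul_ite, smul_eq_mul, mul_zero, smul_zero, mul_ite, ite_mul, zero_mul, add_mul,
      Finset.sum_add_distrib, Finset.sum_ite_eq, Finset.mem_univ, if_pos, Sum.swap_inr]
    ring

lemma vecMulVec_mulVec' {ι : Type*} [Fintype ι] [DecidableEq ι] (a b u : ι → ℝ) (k : ι) :
    (Matrix.vecMulVec a b).mulVec u k = a k * ∑ j, b j * u j := by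
  simp [Matrix.vecMulVec_apply, Matrix.mulVec, dotProduct, Finset.mul_sum, mul_assoc]

/-- For the real-form Gross–Pitaevskii matrix family
`A(v) = A₀ + (β/(vᵀv)) B(v)`, the Jacobian of `v ↦ A(v)v` at `v ≠ 0` is given by the
explicit formula `gpeJ`. -/
theorem stmt18 {m : ℕ} (hm : 1 ≤ m)
    (A₀ : Matrix (Fin m ⊕ Fin m) (Fin m ⊕ Fin m) ℝ) (β : ℝ)
    (v : EuclideanSpace ℝ (Fin m ⊕ Fin m)) (hv : v ≠ 0) :
    HasFDerivAt (fun w => mvCLM (gpeA A₀ β w) w) (mvCLM (gpeJ A₀ β v)) v := by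
  classical
  let e : EuclideanSpace ℝ (Fin m ⊕ Fin m) ≃L[ℝ] ((Fin m ⊕ Fin m) → ℝ) :=
    EuclideanSpace.equiv (Fin m ⊕ Fin m) ℝ
  let q : ((Fin m ⊕ Fin m) → ℝ) → ℝ := fun w => ∑ j, w j * w j
  let v0 : (Fin m ⊕ Fin m) → ℝ := fun j => v j
  have hq0 : q v0 ≠ 0 := by
    have : (0:ℝ) < ∑ j, v j * v j := by
      obtain ⟨i, hi⟩ : ∃ i, v i ≠ 0 := by
        by_contra h
        push_neg at h
        exact hv (by ext i; simpa using h i)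
      exact Finset.sum_pos' (fun j _ => mul_self_nonneg _)
        ⟨i, Finset.mem_univ i, mul_self_pos.2 hi⟩
    simpa [q, v0] using this.ne'
  have hQ : ⟪v, v⟫ = q v0 := by
    simp only [PiLp.inner_apply, RCLike.inner_apply, conj_trivial]
    simp [q, v0, Fintype.sum_sum_type]
  let F : ((Fin m ⊕ Fin m) → ℝ) → ((Fin m ⊕ Fin m) → ℝ) :=
    fun w k => A₀.mulVec w k +
      (β * (q w)⁻¹) * ((w k * w k + w (Sum.swap k) * w (Sum.swap k)) * w k)
  let Jpi : ((Fin m ⊕ Fin m) → ℝ) →L[ℝ] ((Fin m ⊕ Fin m) → ℝ) :=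
    (e : EuclideanSpace ℝ (Fin m ⊕ Fin m) →L[ℝ] ((Fin m ⊕ Fin m) → ℝ)) ∘L
      (mvCLM (gpeJ A₀ β v)) ∘L
      (e.symm : ((Fin m ⊕ Fin m) → ℝ) →L[ℝ] EuclideanSpace ℝ (Fin m ⊕ Fin m))
  have hF : HasFDerivAt F Jpi v0 := by
    apply hasFDerivAt_pi''
    intro k
    have hA : HasFDerivAt (𝕜 := ℝ) (fun w : (Fin m ⊕ Fin m) → ℝ => ∑ j, A₀ k j * w j)
        (∑ j, A₀ k j • ContinuousLinearMap.proj j) v0 :=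
      HasFDerivAt.fun_sum fun j _ => (hasFDerivAt_apply j v0).const_mul (A₀ k j)
    have hq : HasFDerivAt (𝕜 := ℝ) q
        (∑ j, (v0 j • ContinuousLinearMap.proj j + v0 j • ContinuousLinearMap.proj j)) v0 :=
      HasFDerivAt.fun_sum fun j _ => (hasFDerivAt_apply j v0).mul (hasFDerivAt_apply j v0)
    have hinv : HasFDerivAt (fun w => (q w)⁻¹)
        ((-(ContinuousLinearMap.mulLeftRight ℝ ℝ (q v0)⁻¹ (q v0)⁻¹)) ∘L
          (∑ j, (v0 j • ContinuousLinearMap.proj j + v0 j • ContinuousLinearMap.proj j))) v0 :=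
      (hasFDerivAt_inv' (𝕜 := ℝ) hq0).comp v0 hq
    have hc := hinv.const_mul β
    have h1 := ((hasFDerivAt_apply (𝕜 := ℝ) k v0).mul (hasFDerivAt_apply (𝕜 := ℝ) k v0)).add
      ((hasFDerivAt_apply (𝕜 := ℝ) (Sum.swap k) v0).mul
        (hasFDerivAt_apply (𝕜 := ℝ) (Sum.swap k) v0))
    have hg := h1.mul (hasFDerivAt_apply (𝕜 := ℝ) k v0)
    have htot := hA.add (hc.mul hg)
    refine htot.congr_fderiv ?_
    ext u
    have hrhs : (ContinuousLinearMap.proj k ∘L Jpi) u = (gpeJ A₀ β v).mulVec u k := rfl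
    rw [hrhs]
    have hgJ : (gpeJ A₀ β v).mulVec u k
        = A₀.mulVec u k
          + (β / q v0) * ((3 * v k ^ 2 + v (Sum.swap k) ^ 2) * u k
              + 2 * v k * v (Sum.swap k) * u (Sum.swap k))
          - (2 * β / (q v0) ^ 2) * (((v k ^ 2 + v (Sum.swap k) ^ 2) * v k) * ∑ j, v j * u j) := by
      rw [gpeJ, hQ]
      rw [Matrix.sub_mulVec, Matrix.add_mulVec, Matrix.smul_mulVec,
        Matrix.smul_mulVec]
      simp only [Pi.add_apply, Pi.sub_apply, Pi.smul_apply, smul_eq_mul]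
      rw [cmat_mulVec, vecMulVec_mulVec', gpeB_mulVec]
    simp only [ContinuousLinearMap.add_apply, ContinuousLinearMap.coe_comp', Function.comp_apply,
      ContinuousLinearMap.coe_sum', Finset.sum_apply, ContinuousLinearMap.smul_apply,
      ContinuousLinearMap.proj_apply, smul_eq_mul, ContinuousLinearMap.coe_smul',
      Pi.smul_apply, ContinuousLinearMap.coe_add', Pi.add_apply, ContinuousLinearMap.neg_apply,
      Pi.neg_apply, Pi.mul_apply, ContinuousLinearMap.mulLeftRight_apply, hgJ]
    have hs : ∑ j, (v0 j * u j + v0 j * u j) = 2 * ∑ j, v j * u j := by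
      rw [Finset.sum_add_distrib, two_mul]
    have hAu : A₀.mulVec u k = ∑ j, A₀ k j * u j := rfl
    rw [hAu, hs]
    field_simp
    ring
  have hcomp : HasFDerivAt (⇑e.symm ∘ F ∘ ⇑e)
      ((e.symm : ((Fin m ⊕ Fin m) → ℝ) →L[ℝ] EuclideanSpace ℝ (Fin m ⊕ Fin m)) ∘L Jpi ∘L
        (e : EuclideanSpace ℝ (Fin m ⊕ Fin m) →L[ℝ] ((Fin m ⊕ Fin m) → ℝ))) v := by
    have h1 : HasFDerivAt (⇑e)
        (e : EuclideanSpace ℝ (Fin m ⊕ Fin m) →L[ℝ] ((Fin m ⊕ Fin m) → ℝ)) v := e.hasFDerivAt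
    have h2 : HasFDerivAt F Jpi (e v) := hF
    have h3 : HasFDerivAt (⇑e.symm)
        (e.symm : ((Fin m ⊕ Fin m) → ℝ) →L[ℝ] EuclideanSpace ℝ (Fin m ⊕ Fin m))
        (F (e v)) := e.symm.hasFDerivAt
    exact (h3.comp v (h2.comp v h1)).congr_fderiv (by rw [ContinuousLinearMap.comp_assoc])
  have hfun : (fun w => mvCLM (gpeA A₀ β w) w) = ⇑e.symm ∘ F ∘ ⇑e := by
    funext w
    ext k
    show (gpeA A₀ β w).mulVec (fun j => w j) k = F (fun j => w j) k
    rw [gpeA, Matrix.add_mulVec, Matrix.smul_mulVec]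
    simp only [Pi.add_apply, Pi.smul_apply, smul_eq_mul, F]
    rw [gpeB_mulVec]
    have : ⟪w, w⟫ = q (fun j => w j) := by
      simp only [PiLp.inner_apply, RCLike.inner_apply, conj_trivial]
      simp [q, Fintype.sum_sum_type]
    rw [this, div_eq_mul_inv]
    ring
  have hder : mvCLM (gpeJ A₀ β v)
      = (e.symm : ((Fin m ⊕ Fin m) → ℝ) →L[ℝ] EuclideanSpace ℝ (Fin m ⊕ Fin m)) ∘L Jpi ∘L
        (e : EuclideanSpace ℝ (Fin m ⊕ Fin m) →L[ℝ] ((Fin m ⊕ Fin m) → ℝ)) := by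
    ext u k
    rfl
  rw [hfun, hder]
  exact hcomp
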